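/- Let S ⊆ ℝ² be a measurable T(3,2)-set that is symmetric about the origin (x ∈ S implies −x ∈ S) with diameter δ > 4/√3. Then λ₂(S) ≤ min{ πδ²/6 + 4π/9 , 2π }. -/

import Mathlib

open MeasureTheory Metric Real

def IsT32Set (S : Set (EuclideanSpace ℝ (Fin 2))) : Prop :=
  ∀ p ∈ S, ∀ q ∈ S, ∀ r ∈ S, dist p q ≤ 2 ∨ dist q r ≤ 2 ∨ dist p r ≤ 2

section T32Proof

open Set

noncomputable section
namespace T32Aux

/-- squared distance in `ℝ × ℝ` -/
def sd (p q : ℝ × ℝ) : ℝ := (p.1 - q.1)^2 + (p.2 - q.2)^2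

def pt (r θ : ℝ) : ℝ × ℝ := (r * Real.cos θ, r * Real.sin θ)

lemma sd_pt (r θ s φ : ℝ) : sd (pt r θ) (pt s φ) = r^2 + s^2 - 2*r*s*Real.cos (θ - φ) := by
  simp only [sd, pt, Real.cos_sub]
  nlinarith [Real.sin_sq_add_cos_sq θ, Real.sin_sq_add_cos_sq φ]

lemma sd_pt_neg (r θ s φ : ℝ) :
    sd (pt r θ) (-(pt s φ)) = r^2 + s^2 + 2*r*s*Real.cos (θ - φ) := by
  simp only [sd, pt, Real.cos_sub, Prod.fst_neg, Prod.snd_neg]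
  nlinarith [Real.sin_sq_add_cos_sq θ, Real.sin_sq_add_cos_sq φ]

lemma nsq_pt (r θ : ℝ) : (pt r θ).1^2 + (pt r θ).2^2 = r^2 := by
  simp only [pt]
  nlinarith [Real.sin_sq_add_cos_sq θ]

/-- radial integral of the indicator at angle θ -/
def gg (K : Set (ℝ × ℝ)) (θ : ℝ) : ℝ :=
  ∫ r in Set.Ioi (0:ℝ), r * Set.indicator K (fun _ => (1:ℝ)) (pt r θ)

lemma gg_nonneg (K : Set (ℝ × ℝ)) (θ : ℝ) : 0 ≤ gg K θ := by
  apply setIntegral_nonneg measurableSet_Ioi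
  intro r hr
  have : (0:ℝ) ≤ Set.indicator K (fun _ => (1:ℝ)) (pt r θ) :=
    Set.indicator_nonneg (fun _ _ => zero_le_one) _
  exact mul_nonneg (le_of_lt hr) this

lemma measurable_radial {K : Set (ℝ × ℝ)} (hK : MeasurableSet K) (θ : ℝ) :
    Measurable (fun r => r * Set.indicator K (fun _ => (1:ℝ)) (pt r θ)) := by
  apply measurable_id.mul
  exact (measurable_const.indicator hK).comp
    (Continuous.measurable (by continuity : Continuous (fun r : ℝ => pt r θ)))

lemma integrable_cutoff {c : ℝ} :
    Integrable ((Set.Ioc (0:ℝ) c).indicator id) (volume.restrict (Set.Ioi 0)) := by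
  apply Integrable.restrict
  apply IntegrableOn.integrable_indicator _ measurableSet_Ioc
  exact (intervalIntegral.intervalIntegrable_id (a := 0) (b := c) (μ := volume)).1

lemma integrableOn_radial {K : Set (ℝ × ℝ)} (hK : MeasurableSet K) {θ c : ℝ}
    (h : ∀ r, 0 < r → pt r θ ∈ K → r ≤ c) :
    IntegrableOn (fun r => r * Set.indicator K (fun _ => (1:ℝ)) (pt r θ)) (Set.Ioi 0) := by
  apply Integrable.mono' (integrable_cutoff (c := c)) ((measurable_radial hK θ).aestronglyMeasurable)
  filter_upwards [ae_restrict_mem measurableSet_Ioi] with r hr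
  rcases Classical.em (pt r θ ∈ K) with hmem | hmem
  · simp only [Set.indicator_of_mem hmem, mul_one]
    rw [Real.norm_eq_abs, abs_of_pos hr]
    have : r ∈ Set.Ioc (0:ℝ) c := ⟨hr, h r hr hmem⟩
    simp [Set.indicator_of_mem this]
  · simp only [Set.indicator_of_notMem hmem, mul_zero, norm_zero]
    exact Set.indicator_nonneg (fun x hx => le_of_lt hx.1) r

lemma radial_le_cutoff {K : Set (ℝ × ℝ)} {θ c : ℝ}
    (h : ∀ r, 0 < r → pt r θ ∈ K → r ≤ c) (r : ℝ) (hr : r ∈ Set.Ioi (0:ℝ)) :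
    r * Set.indicator K (fun _ => (1:ℝ)) (pt r θ) ≤ (Set.Ioc (0:ℝ) c).indicator id r := by
  rcases Classical.em (pt r θ ∈ K) with hmem | hmem
  · simp only [Set.indicator_of_mem hmem, mul_one]
    have : r ∈ Set.Ioc (0:ℝ) c := ⟨hr, h r hr hmem⟩
    simp [Set.indicator_of_mem this]
  · simp only [Set.indicator_of_notMem hmem, mul_zero]
    apply Set.indicator_nonneg
    intro x hx; exact le_of_lt hx.1

lemma integral_cutoff {c : ℝ} (hc : 0 ≤ c) :
    ∫ r in Set.Ioi (0:ℝ), (Set.Ioc (0:ℝ) c).indicator id r = c^2/2 := by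
  rw [setIntegral_indicator measurableSet_Ioc]
  have hs : Set.Ioi (0:ℝ) ∩ Set.Ioc 0 c = Set.Ioc 0 c := by
    ext x
    constructor
    · rintro ⟨_, hx⟩; exact hx
    · intro hx; exact ⟨hx.1, hx⟩
  rw [hs, ← intervalIntegral.integral_of_le hc]
  simp [integral_id]

lemma gg_le {K : Set (ℝ × ℝ)} (hK : MeasurableSet K) {θ c : ℝ} (hc : 0 ≤ c)
    (h : ∀ r, 0 < r → pt r θ ∈ K → r ≤ c) : gg K θ ≤ c^2/2 := by
  rw [gg, ← integral_cutoff hc]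
  exact setIntegral_mono_on (integrableOn_radial hK h) (integrable_cutoff (c := c))
    measurableSet_Ioi (radial_le_cutoff h)

lemma volume_eq_integral_gg {K : Set (ℝ × ℝ)} (hK : MeasurableSet K) {M : ℝ} (hM0 : 0 ≤ M)
    (hM : ∀ p ∈ K, p.1^2 + p.2^2 ≤ M^2) :
    (volume K).toReal = ∫ θ in Set.Ioo (-π) π, gg K θ := by
  have hsymm_cont : Continuous (fun p : ℝ × ℝ => pt p.1 p.2) :=
    (continuous_fst.mul (Real.continuous_cos.comp continuous_snd)).prodMk
      (continuous_fst.mul (Real.continuous_sin.comp continuous_snd))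
  have hFmeas : Measurable (fun p : ℝ × ℝ =>
      p.1 * Set.indicator K (fun _ => (1:ℝ)) (pt p.1 p.2)) :=
    measurable_fst.mul ((measurable_const.indicator hK).comp hsymm_cont.measurable)
  have hF : Integrable (fun p : ℝ × ℝ =>
      p.1 * Set.indicator K (fun _ => (1:ℝ)) (pt p.1 p.2))
      ((volume.restrict (Set.Ioi 0)).prod (volume.restrict (Set.Ioo (-π) π))) := by
    apply Integrable.mono'
      (g := fun p : ℝ × ℝ => (Set.Ioc (0:ℝ) M).indicator id p.1 * (fun _ : ℝ => (1:ℝ)) p.2)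
    · exact Integrable.mul_prod integrable_cutoff
        (integrableOn_const measure_Ioo_lt_top.ne)
    · exact hFmeas.aestronglyMeasurable
    · rw [Measure.prod_restrict]
      filter_upwards [ae_restrict_mem (measurableSet_Ioi.prod measurableSet_Ioo)] with p hp
      obtain ⟨hp1, _⟩ := hp
      rcases Classical.em (pt p.1 p.2 ∈ K) with hmem | hmem
      · simp only [Set.indicator_of_mem hmem, mul_one]
        rw [Real.norm_eq_abs, abs_of_pos hp1]
        have hle : p.1 ≤ M := by
          have := hM _ hmem
          rw [nsq_pt] at this
          nlinarith [le_of_lt (show (0:ℝ) < p.1 from hp1)]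
        have : p.1 ∈ Set.Ioc (0:ℝ) M := ⟨hp1, hle⟩
        simp [Set.indicator_of_mem this]
      · simp only [Set.indicator_of_notMem hmem, mul_zero, norm_zero, mul_one]
        exact Set.indicator_nonneg (fun x hx => le_of_lt hx.1) _
  calc (volume K).toReal
      = ∫ p, Set.indicator K (fun _ => (1:ℝ)) p := by
        exact (integral_indicator_one hK).symm
    _ = ∫ p in polarCoord.target, p.1 • Set.indicator K (fun _ => (1:ℝ)) (polarCoord.symm p) :=
        (integral_comp_polarCoord_symm _).symm
    _ = ∫ θ in Set.Ioo (-π) π, gg K θ := by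
        rw [polarCoord_target, Measure.volume_eq_prod, ← Measure.prod_restrict]
        have := integral_prod_symm (μ := volume.restrict (Set.Ioi 0))
          (ν := volume.restrict (Set.Ioo (-π) π))
          (fun p : ℝ × ℝ => p.1 * Set.indicator K (fun _ => (1:ℝ)) (pt p.1 p.2)) hF
        simp only [polarCoord_symm_apply, smul_eq_mul]
        rw [show (fun p : ℝ × ℝ => p.1 * Set.indicator K (fun _ => (1:ℝ))
            (p.1 * Real.cos p.2, p.1 * Real.sin p.2)) = (fun p : ℝ × ℝ =>
            p.1 * Set.indicator K (fun _ => (1:ℝ)) (pt p.1 p.2)) from rfl]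
        rw [this]
        rfl

lemma section_le_two {K : Set (ℝ × ℝ)} (hR4 : ∀ p ∈ K, p.1^2 + p.2^2 ≤ 4) :
    ∀ ψ r : ℝ, 0 < r → pt r ψ ∈ K → r ≤ 2 := by
  intro ψ r hr hm
  have := hR4 _ hm
  rw [nsq_pt] at this
  nlinarith

lemma exists_max_radius {K : Set (ℝ × ℝ)} (hKc : IsCompact K) {θ r₀ : ℝ}
    (h0 : 0 < r₀) (hr₀ : pt r₀ θ ∈ K) :
    ∃ a, 0 < a ∧ pt a θ ∈ K ∧ ∀ r, 0 < r → pt r θ ∈ K → r ≤ a := by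
  obtain ⟨M, hMn, hM⟩ : ∃ M, 0 ≤ M ∧ ∀ p ∈ K, ‖p‖ ≤ M := by
    obtain ⟨C, hC⟩ := hKc.isBounded.exists_norm_le
    exact ⟨max C 0, le_max_right _ _, fun p hp => (hC p hp).trans (le_max_left _ _)⟩
  set T : Set ℝ := {r | 0 ≤ r ∧ pt r θ ∈ K} with hT
  have hTne : T.Nonempty := ⟨r₀, h0.le, hr₀⟩
  have hTc : IsCompact T := by
    have hclosed : IsClosed T := by
      have : Continuous (fun r : ℝ => pt r θ) :=
        (continuous_id.mul continuous_const).prodMk (continuous_id.mul continuous_const)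
      exact isClosed_Ici.inter (hKc.isClosed.preimage this)
    have hbdd : T ⊆ Set.Icc 0 (2*M+1) := by
      rintro r ⟨hr0, hrK⟩
      refine ⟨hr0, ?_⟩
      have h1 : |(pt r θ).1| ≤ M := by
        rw [← Real.norm_eq_abs]; exact (norm_fst_le (pt r θ)).trans (hM _ hrK)
      have h2 : |(pt r θ).2| ≤ M := by
        rw [← Real.norm_eq_abs]; exact (norm_snd_le (pt r θ)).trans (hM _ hrK)
      have h3 : (pt r θ).1^2 + (pt r θ).2^2 ≤ 2*M^2 := by
        nlinarith [sq_abs ((pt r θ).1), sq_abs ((pt r θ).2),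
          abs_nonneg ((pt r θ).1), abs_nonneg ((pt r θ).2)]
      rw [nsq_pt] at h3
      nlinarith
    exact (isCompact_Icc.of_isClosed_subset hclosed hbdd)
  have haT : sSup T ∈ T := hTc.sSup_mem hTne
  refine ⟨sSup T, lt_of_lt_of_le h0 (le_csSup hTc.bddAbove ⟨h0.le, hr₀⟩), haT.2, ?_⟩
  intro r hr hrK
  exact le_csSup hTc.bddAbove ⟨hr.le, hrK⟩

lemma sigma_le_aux {K : Set (ℝ × ℝ)} (hK : MeasurableSet K) (hsym : ∀ p ∈ K, -p ∈ K)
    (hT32 : ∀ p ∈ K, ∀ q ∈ K, ∀ r ∈ K, sd p q ≤ 4 ∨ sd q r ≤ 4 ∨ sd p r ≤ 4)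
    {θ φ a : ℝ} (hperp : Real.cos (θ - φ) = 0)
    (ha : 0 < a) (ha4 : a^2 ≤ 4) (haK : pt a θ ∈ K)
    (hamax : ∀ r, 0 < r → pt r θ ∈ K → r ≤ a)
    (hbmax : ∀ r, 0 < r → pt r φ ∈ K → r ≤ a) :
    gg K θ + gg K φ ≤ 2 := by
  rcases le_or_gt a 1 with h1 | h1
  · have g1 := gg_le hK ha.le hamax
    have g2 := gg_le hK ha.le hbmax
    nlinarith
  · have hnu : -(pt a θ) ∈ K := hsym _ haK
    have hbound : ∀ r, 0 < r → pt r φ ∈ K → r ≤ Real.sqrt (4 - a^2) := by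
      intro r hr hq
      have htr := hT32 _ hq _ haK _ hnu
      have e1 : sd (pt r φ) (pt a θ) = r^2 + a^2 := by
        rw [sd_pt]
        have : Real.cos (φ - θ) = 0 := by rw [← Real.cos_neg, neg_sub]; exact hperp
        rw [this]; ring
      have e2 : sd (pt a θ) (-(pt a θ)) = 4*a^2 := by
        rw [sd_pt_neg, sub_self, Real.cos_zero]; ring
      have e3 : sd (pt r φ) (-(pt a θ)) = r^2 + a^2 := by
        rw [sd_pt_neg]
        have : Real.cos (φ - θ) = 0 := by rw [← Real.cos_neg, neg_sub]; exact hperp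
        rw [this]; ring
      have hr2 : r^2 ≤ 4 - a^2 := by
        rcases htr with h | h | h
        · rw [e1] at h; linarith
        · rw [e2] at h; nlinarith
        · rw [e3] at h; linarith
      calc r = Real.sqrt (r^2) := (Real.sqrt_sq hr.le).symm
        _ ≤ Real.sqrt (4 - a^2) := Real.sqrt_le_sqrt hr2
    have g1 := gg_le hK ha.le hamax
    have g2 := gg_le hK (Real.sqrt_nonneg _) hbound
    rw [Real.sq_sqrt (by linarith : (0:ℝ) ≤ 4 - a^2)] at g2
    linarith

lemma gg_eq_zero {K : Set (ℝ × ℝ)} (hK : MeasurableSet K) {θ : ℝ}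
    (h : ¬ ∃ r, 0 < r ∧ pt r θ ∈ K) : gg K θ = 0 := by
  have h0 := gg_le hK le_rfl (c := 0) (fun r hr hm => absurd ⟨r, hr, hm⟩ h)
  have := gg_nonneg K θ
  nlinarith

lemma sigma_le {K : Set (ℝ × ℝ)} (hKc : IsCompact K) (hK : MeasurableSet K)
    (hsym : ∀ p ∈ K, -p ∈ K)
    (hT32 : ∀ p ∈ K, ∀ q ∈ K, ∀ r ∈ K, sd p q ≤ 4 ∨ sd q r ≤ 4 ∨ sd p r ≤ 4)
    (hR4 : ∀ p ∈ K, p.1^2 + p.2^2 ≤ 4) {θ φ : ℝ} (hperp : Real.cos (θ - φ) = 0) :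
    gg K θ + gg K φ ≤ 2 := by
  have h2 := section_le_two hR4
  by_cases hA : ∃ r, 0 < r ∧ pt r θ ∈ K
  · by_cases hB : ∃ r, 0 < r ∧ pt r φ ∈ K
    · obtain ⟨r₁, hr₁, hr₁K⟩ := hA
      obtain ⟨r₂, hr₂, hr₂K⟩ := hB
      obtain ⟨a, ha, haK, hamax⟩ := exists_max_radius hKc hr₁ hr₁K
      obtain ⟨b, hb, hbK, hbmax⟩ := exists_max_radius hKc hr₂ hr₂K
      rcases le_total b a with hba | hab
      · exact sigma_le_aux hK hsym hT32 hperp ha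
          (by nlinarith [h2 θ a ha haK]) haK hamax
          (fun r hr hm => (hbmax r hr hm).trans hba)
      · have hperp' : Real.cos (φ - θ) = 0 := by rw [← Real.cos_neg, neg_sub]; exact hperp
        rw [add_comm]
        exact sigma_le_aux hK hsym hT32 hperp' hb
          (by nlinarith [h2 φ b hb hbK]) hbK hbmax
          (fun r hr hm => (hamax r hr hm).trans hab)
    · have g2 : gg K φ = 0 := gg_eq_zero hK hB
      have g1 : gg K θ ≤ 2 := by
        have := gg_le hK (by norm_num : (0:ℝ) ≤ 2) (h2 θ)
        linarith [this]
      linarith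
  · have g1 : gg K θ = 0 := gg_eq_zero hK hA
    have g2 : gg K φ ≤ 2 := by
      have := gg_le hK (by norm_num : (0:ℝ) ≤ 2) (h2 φ)
      linarith [this]
    linarith

lemma sigma_le_diam {V : Set (ℝ × ℝ)} (hVc : IsCompact V) (hV : MeasurableSet V)
    (h0 : ((0:ℝ),(0:ℝ)) ∈ V) (hd : ∀ p ∈ V, ∀ q ∈ V, sd p q ≤ 4)
    {θ φ : ℝ} (hperp : Real.cos (θ - φ) = 0) :
    gg V θ + gg V φ ≤ 2 := by
  have h2 : ∀ ψ r : ℝ, 0 < r → pt r ψ ∈ V → r ≤ 2 := by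
    intro ψ r hr hm
    have hsd := hd _ hm _ h0
    have hseq : sd (pt r ψ) ((0:ℝ),(0:ℝ)) = r^2 := by
      have : sd (pt r ψ) ((0:ℝ),(0:ℝ)) = (pt r ψ).1^2 + (pt r ψ).2^2 := by
        simp [sd]
      rw [this, nsq_pt]
    rw [hseq] at hsd
    nlinarith
  by_cases hA : ∃ r, 0 < r ∧ pt r θ ∈ V
  · by_cases hB : ∃ r, 0 < r ∧ pt r φ ∈ V
    · obtain ⟨r₁, hr₁, hr₁K⟩ := hA
      obtain ⟨r₂, hr₂, hr₂K⟩ := hB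
      obtain ⟨a, ha, haK, hamax⟩ := exists_max_radius hVc hr₁ hr₁K
      obtain ⟨b, hb, hbK, hbmax⟩ := exists_max_radius hVc hr₂ hr₂K
      have hab : a^2 + b^2 ≤ 4 := by
        have := hd _ haK _ hbK
        rw [sd_pt, hperp] at this
        linarith [this]
      have g1 := gg_le hV ha.le hamax
      have g2 := gg_le hV hb.le hbmax
      linarith
    · have g2 : gg V φ = 0 := gg_eq_zero hV hB
      have g1 : gg V θ ≤ 2 := by
        have := gg_le hV (by norm_num : (0:ℝ) ≤ 2) (h2 θ)
        linarith [this]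
      linarith
  · have g1 : gg V θ = 0 := gg_eq_zero hV hA
    have g2 : gg V φ ≤ 2 := by
      have := gg_le hV (by norm_num : (0:ℝ) ≤ 2) (h2 φ)
      linarith [this]
    linarith

lemma gg_stronglyMeasurable {K : Set (ℝ × ℝ)} (hK : MeasurableSet K) :
    StronglyMeasurable (gg K) := by
  have hcont : Continuous (fun q : ℝ × ℝ => pt q.2 q.1) :=
    (continuous_snd.mul (Real.continuous_cos.comp continuous_fst)).prodMk
      (continuous_snd.mul (Real.continuous_sin.comp continuous_fst))
  have hFmeas : StronglyMeasurable (fun q : ℝ × ℝ =>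
      q.2 * Set.indicator K (fun _ => (1:ℝ)) (pt q.2 q.1)) :=
    (measurable_snd.mul ((measurable_const.indicator hK).comp hcont.measurable)).stronglyMeasurable
  exact hFmeas.integral_prod_right'

lemma gg_bounded {K : Set (ℝ × ℝ)} (hK : MeasurableSet K) {M : ℝ} (hM0 : 0 ≤ M)
    (hM : ∀ p ∈ K, p.1^2 + p.2^2 ≤ M^2) (θ : ℝ) : gg K θ ≤ M^2/2 := by
  apply gg_le hK hM0
  intro r hr hm
  have := hM _ hm
  rw [nsq_pt] at this
  nlinarith

lemma gg_integrableOn {K : Set (ℝ × ℝ)} (hK : MeasurableSet K) {M : ℝ} (hM0 : 0 ≤ M)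
    (hM : ∀ p ∈ K, p.1^2 + p.2^2 ≤ M^2) {s : Set ℝ} (hsf : volume s ≠ ⊤) :
    IntegrableOn (gg K) s := by
  apply Integrable.mono' (g := fun _ => M^2/2)
    (integrableOn_const hsf)
    (gg_stronglyMeasurable hK).aestronglyMeasurable.restrict
  filter_upwards with θ
  rw [Real.norm_eq_abs, abs_of_nonneg (gg_nonneg K θ)]
  exact gg_bounded hK hM0 hM θ

lemma exists_far_point {K : Set (ℝ × ℝ)} (hK : MeasurableSet K) {θ : ℝ}
    (h : 2/3 < gg K θ) : ∃ r, 2/Real.sqrt 3 < r ∧ pt r θ ∈ K := by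
  by_contra hc
  push_neg at hc
  have hb : ∀ r, 0 < r → pt r θ ∈ K → r ≤ 2/Real.sqrt 3 := by
    intro r hr hm
    by_contra hgt
    push_neg at hgt
    exact absurd (hc r hgt) (by simpa using hm)
  have hsq : (2/Real.sqrt 3)^2 = 4/3 := by
    rw [div_pow, Real.sq_sqrt (by norm_num : (3:ℝ) ≥ 0)]
    norm_num
  have := gg_le hK (by positivity) hb
  rw [hsq] at this
  linarith

lemma cos_special : Real.cos (2*π/3) = -(1/2) ∧ Real.cos (4*π/3) = -(1/2) ∧
    Real.cos (8*π/3) = -(1/2) := by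
  have h1 : Real.cos (2*π/3) = -(1/2) := by
    rw [show (2*π/3 : ℝ) = π - π/3 by ring, Real.cos_pi_sub, Real.cos_pi_div_three]
  have h2 : Real.cos (4*π/3) = -(1/2) := by
    rw [show (4*π/3 : ℝ) = π/3 + π by ring, Real.cos_add_pi, Real.cos_pi_div_three]
  have h3 : Real.cos (8*π/3) = -(1/2) := by
    rw [show (8*π/3 : ℝ) = 2*π/3 + 2*π by ring, Real.cos_add_two_pi, h1]
  exact ⟨h1, h2, h3⟩

lemma far_pair {r s x : ℝ} (hr : 2/Real.sqrt 3 < r) (hs : 2/Real.sqrt 3 < s)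
    (hx : Real.cos x = -(1/2)) : ¬ (r^2 + s^2 - 2*r*s*Real.cos x ≤ 4) := by
  rw [hx]
  have hsq : (2/Real.sqrt 3)^2 = 4/3 := by
    rw [div_pow, Real.sq_sqrt (by norm_num : (3:ℝ) ≥ 0)]
    norm_num
  have hpos : (0:ℝ) < 2/Real.sqrt 3 := by positivity
  intro hle
  nlinarith [mul_lt_mul'' hr hs hpos.le hpos.le, mul_pos (hpos.trans hr) (hpos.trans hs)]

lemma rot_measure {E : Set ℝ} (hEm : MeasurableSet E) (hEI : E ⊆ Set.Ioo (-π) π)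
    {c : ℝ} (hc0 : 0 < c) (hc2 : c < 2*π) :
    volume (Set.Ioo (-π) π ∩
      ((fun θ => θ + c) ⁻¹' E ∪ (fun θ => θ + (c - 2*π)) ⁻¹' E)) = volume E := by
  have h1 : Set.Ioo (-π) π ∩ (fun θ => θ + c) ⁻¹' E
      = (fun θ => θ + c) ⁻¹' (E ∩ Set.Ioi (c - π)) := by
    ext θ
    simp only [Set.mem_inter_iff, Set.mem_preimage, Set.mem_Ioo, Set.mem_Ioi]
    constructor
    · rintro ⟨⟨hl, _⟩, hθE⟩
      exact ⟨hθE, by linarith⟩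
    · rintro ⟨hθE, hgt⟩
      obtain ⟨hl, hu⟩ := hEI hθE
      exact ⟨⟨by linarith, by linarith⟩, hθE⟩
  have h2 : Set.Ioo (-π) π ∩ (fun θ => θ + (c - 2*π)) ⁻¹' E
      = (fun θ => θ + (c - 2*π)) ⁻¹' (E ∩ Set.Iio (c - π)) := by
    ext θ
    simp only [Set.mem_inter_iff, Set.mem_preimage, Set.mem_Ioo, Set.mem_Iio]
    constructor
    · rintro ⟨⟨_, hu⟩, hθE⟩
      exact ⟨hθE, by linarith⟩
    · rintro ⟨hθE, hlt⟩
      obtain ⟨hl, hu⟩ := hEI hθE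
      exact ⟨⟨by linarith, by linarith⟩, hθE⟩
  have hdisj : Disjoint (Set.Ioo (-π) π ∩ (fun θ => θ + c) ⁻¹' E)
      (Set.Ioo (-π) π ∩ (fun θ => θ + (c - 2*π)) ⁻¹' E) := by
    rw [h1, h2]
    rw [Set.disjoint_left]
    rintro θ ⟨hE1, _⟩ ⟨hE2, _⟩
    have u1 := (hEI hE1).2
    have u2 := (hEI hE2).1
    simp only at u1 u2
    linarith
  have hmeas2 : MeasurableSet (Set.Ioo (-π) π ∩ (fun θ => θ + (c - 2*π)) ⁻¹' E) :=
    measurableSet_Ioo.inter ((measurable_add_const _) hEm)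
  rw [Set.inter_union_distrib_left, measure_union hdisj hmeas2, h1, h2,
    measure_preimage_add_right, measure_preimage_add_right]
  have hsplit : E ∩ Set.Ioi (c - π) ∪ E ∩ Set.Iio (c - π) = E \ {c - π} := by
    ext x
    simp only [Set.mem_union, Set.mem_inter_iff, Set.mem_Ioi, Set.mem_Iio, Set.mem_diff,
      Set.mem_singleton_iff]
    constructor
    · rintro (⟨hx, h⟩ | ⟨hx, h⟩) <;> exact ⟨hx, by intro he; rw [he] at h; linarith⟩
    · rintro ⟨hx, hne⟩
      rcases lt_or_gt_of_ne (fun h => hne h.symm) with h | h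
      · left; exact ⟨hx, h⟩
      · right; exact ⟨hx, h⟩
  have hdisj2 : Disjoint (E ∩ Set.Ioi (c - π)) (E ∩ Set.Iio (c - π)) := by
    rw [Set.disjoint_left]
    rintro x ⟨_, h1'⟩ ⟨_, h2'⟩
    simp only [Set.mem_Ioi] at h1'
    simp only [Set.mem_Iio] at h2'
    linarith
  rw [← measure_union hdisj2 (hEm.inter measurableSet_Iio), hsplit,
    measure_diff_null (Real.volume_singleton)]

lemma measure_E_le {K : Set (ℝ × ℝ)} (hKc : IsCompact K) (hK : MeasurableSet K)
    (hT32 : ∀ p ∈ K, ∀ q ∈ K, ∀ r ∈ K, sd p q ≤ 4 ∨ sd q r ≤ 4 ∨ sd p r ≤ 4) :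
    (volume (Set.Ioo (-π) π ∩ gg K ⁻¹' (Set.Ioi (2/3)))).toReal ≤ 4*π/3 := by
  set I : Set ℝ := Set.Ioo (-π) π with hI
  set E : Set ℝ := I ∩ gg K ⁻¹' (Set.Ioi (2/3)) with hE
  have hEm : MeasurableSet E :=
    measurableSet_Ioo.inter ((gg_stronglyMeasurable hK).measurable (measurableSet_Ioi))
  have hEI : E ⊆ I := Set.inter_subset_left
  have hIfin : volume I ≠ ⊤ := by
    rw [hI, Real.volume_Ioo]
    exact ENNReal.ofReal_ne_top
  have hEfin : volume E ≠ ⊤ := fun h => hIfin (top_le_iff.mp (h ▸ measure_mono hEI))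
  by_contra hcon
  push_neg at hcon
  -- the two "rotated" copies of E
  set A1 : Set ℝ := (fun θ => θ + 2*π/3) ⁻¹' E with hA1
  set A2 : Set ℝ := (fun θ => θ + (2*π/3 - 2*π)) ⁻¹' E with hA2
  set B1 : Set ℝ := (fun θ => θ + 4*π/3) ⁻¹' E with hB1
  set B2 : Set ℝ := (fun θ => θ + (4*π/3 - 2*π)) ⁻¹' E with hB2
  have hπ : 0 < π := Real.pi_pos
  -- measures of the inner pieces
  have hIA : volume (I ∩ (A1 ∪ A2)) = volume E :=
    rot_measure hEm hEI (by positivity) (by linarith)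
  have hIB : volume (I ∩ (B1 ∪ B2)) = volume E :=
    rot_measure hEm hEI (by positivity) (by linarith)
  -- covering inequality gives a common point
  have hAm : MeasurableSet (A1 ∪ A2) :=
    ((measurable_add_const _) hEm).union ((measurable_add_const _) hEm)
  have hBm : MeasurableSet (B1 ∪ B2) :=
    ((measurable_add_const _) hEm).union ((measurable_add_const _) hEm)
  have hnon : (E ∩ (A1 ∪ A2) ∩ (B1 ∪ B2)).Nonempty := by
    rw [Set.nonempty_iff_ne_empty]
    intro hempty
    have hcover : I ⊆ (I \ E) ∪ (I \ (A1 ∪ A2)) ∪ (I \ (B1 ∪ B2)) := by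
      intro θ hθ
      by_cases h1 : θ ∈ E
      · by_cases h2 : θ ∈ A1 ∪ A2
        · by_cases h3 : θ ∈ B1 ∪ B2
          · exact absurd (Set.eq_empty_iff_forall_notMem.mp hempty θ ⟨⟨h1, h2⟩, h3⟩) (fun h => h)
          · exact Or.inr ⟨hθ, h3⟩
        · exact Or.inl (Or.inr ⟨hθ, h2⟩)
      · exact Or.inl (Or.inl ⟨hθ, h1⟩)
    have hle : volume I ≤ volume (I \ E) + volume (I \ (A1 ∪ A2)) + volume (I \ (B1 ∪ B2)) :=
      (measure_mono hcover).trans ((measure_union_le _ _).trans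
        (add_le_add_left (measure_union_le _ _) _))
    -- convert to reals
    have hm1 : volume E + volume (I \ E) = volume I := by
      rw [measure_add_diff hEm.nullMeasurableSet I, Set.union_eq_self_of_subset_left hEI]
    have hm2 : volume E + volume (I \ (A1 ∪ A2)) = volume I := by
      rw [← hIA, ← Set.diff_self_inter,
        measure_add_diff (measurableSet_Ioo.inter hAm).nullMeasurableSet I,
        Set.union_eq_self_of_subset_left Set.inter_subset_left]
    have hm3 : volume E + volume (I \ (B1 ∪ B2)) = volume I := by
      rw [← hIB, ← Set.diff_self_inter,
        measure_add_diff (measurableSet_Ioo.inter hBm).nullMeasurableSet I,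
        Set.union_eq_self_of_subset_left Set.inter_subset_left]
    have hfin1 : volume (I \ E) ≠ ⊤ :=
      fun h => hIfin (top_le_iff.mp (h ▸ measure_mono Set.diff_subset))
    have hfin2 : volume (I \ (A1 ∪ A2)) ≠ ⊤ :=
      fun h => hIfin (top_le_iff.mp (h ▸ measure_mono Set.diff_subset))
    have hfin3 : volume (I \ (B1 ∪ B2)) ≠ ⊤ :=
      fun h => hIfin (top_le_iff.mp (h ▸ measure_mono Set.diff_subset))
    have htI : (volume I).toReal = 2*π := by
      rw [hI, Real.volume_Ioo, ENNReal.toReal_ofReal (by linarith)]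
      ring
    have ht1 : (volume E).toReal + (volume (I \ E)).toReal = 2*π := by
      rw [← ENNReal.toReal_add hEfin hfin1, hm1, htI]
    have ht2 : (volume E).toReal + (volume (I \ (A1 ∪ A2))).toReal = 2*π := by
      rw [← ENNReal.toReal_add hEfin hfin2, hm2, htI]
    have ht3 : (volume E).toReal + (volume (I \ (B1 ∪ B2))).toReal = 2*π := by
      rw [← ENNReal.toReal_add hEfin hfin3, hm3, htI]
    have htle : (volume I).toReal ≤ (volume (I \ E)).toReal
        + (volume (I \ (A1 ∪ A2))).toReal + (volume (I \ (B1 ∪ B2))).toReal := by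
      rw [← ENNReal.toReal_add hfin1 hfin2,
        ← ENNReal.toReal_add (ENNReal.add_ne_top.mpr ⟨hfin1, hfin2⟩) hfin3]
      exact ENNReal.toReal_mono (by simp [ENNReal.add_ne_top, hfin1, hfin2, hfin3]) hle
    rw [htI] at htle
    linarith
  obtain ⟨θ, ⟨⟨hθE, hθA⟩, hθB⟩⟩ := hnon
  obtain ⟨r₁, hr₁, hm₁⟩ := exists_far_point hK hθE.2
  have hgetA : ∃ c, (c = 2*π/3 ∨ c = 2*π/3 - 2*π) ∧ θ + c ∈ E := by
    rcases hθA with h | h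
    · exact ⟨2*π/3, Or.inl rfl, h⟩
    · exact ⟨2*π/3 - 2*π, Or.inr rfl, h⟩
  have hgetB : ∃ c, (c = 4*π/3 ∨ c = 4*π/3 - 2*π) ∧ θ + c ∈ E := by
    rcases hθB with h | h
    · exact ⟨4*π/3, Or.inl rfl, h⟩
    · exact ⟨4*π/3 - 2*π, Or.inr rfl, h⟩
  obtain ⟨c₂, hc₂, hθ₂⟩ := hgetA
  obtain ⟨c₃, hc₃, hθ₃⟩ := hgetB
  obtain ⟨r₂, hr₂, hm₂⟩ := exists_far_point hK hθ₂.2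
  obtain ⟨r₃, hr₃, hm₃⟩ := exists_far_point hK hθ₃.2
  obtain ⟨hcos1, hcos2, hcos3⟩ := cos_special
  have htr := hT32 _ hm₁ _ hm₂ _ hm₃
  rw [sd_pt, sd_pt, sd_pt] at htr
  have e1 : Real.cos (θ - (θ + c₂)) = -(1/2) := by
    rcases hc₂ with h | h <;> rw [h]
    · rw [show θ - (θ + 2*π/3) = -(2*π/3) by ring, Real.cos_neg, hcos1]
    · rw [show θ - (θ + (2*π/3 - 2*π)) = 4*π/3 by ring, hcos2]
  have e2 : Real.cos (θ - (θ + c₃)) = -(1/2) := by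
    rcases hc₃ with h | h <;> rw [h]
    · rw [show θ - (θ + 4*π/3) = -(4*π/3) by ring, Real.cos_neg, hcos2]
    · rw [show θ - (θ + (4*π/3 - 2*π)) = 2*π/3 by ring, hcos1]
  have e3 : Real.cos ((θ + c₂) - (θ + c₃)) = -(1/2) := by
    rcases hc₂ with h | h <;> rcases hc₃ with h' | h' <;> rw [h, h']
    · rw [show (θ + 2*π/3) - (θ + 4*π/3) = -(2*π/3) by ring, Real.cos_neg, hcos1]
    · rw [show (θ + 2*π/3) - (θ + (4*π/3 - 2*π)) = 4*π/3 by ring, hcos2]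
    · rw [show (θ + (2*π/3 - 2*π)) - (θ + 4*π/3) = -(8*π/3) by ring, Real.cos_neg, hcos3]
    · rw [show (θ + (2*π/3 - 2*π)) - (θ + (4*π/3 - 2*π)) = -(2*π/3) by ring, Real.cos_neg, hcos1]
  rcases htr with h | h | h
  · exact far_pair hr₁ hr₂ e1 h
  · exact far_pair hr₂ hr₃ e3 (by rwa [show (θ+c₂) - (θ+c₃) = (θ+c₂) - (θ+c₃) from rfl] at h)
  · exact far_pair hr₁ hr₃ e2 h

lemma boundA {K : Set (ℝ × ℝ)} (hKc : IsCompact K) (hK : MeasurableSet K)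
    (hT32 : ∀ p ∈ K, ∀ q ∈ K, ∀ r ∈ K, sd p q ≤ 4 ∨ sd q r ≤ 4 ∨ sd p r ≤ 4)
    {R : ℝ} (hR : 2/Real.sqrt 3 ≤ R) (hRK : ∀ p ∈ K, p.1^2 + p.2^2 ≤ R^2) :
    (volume K).toReal ≤ 2*π/3*R^2 + 4*π/9 := by
  have hπ : 0 < π := Real.pi_pos
  have hR0 : 0 < R := lt_of_lt_of_le (by positivity) hR
  have hR43 : 4/3 ≤ R^2 := by
    have hsq : (2/Real.sqrt 3)^2 = 4/3 := by
      rw [div_pow, Real.sq_sqrt (by norm_num : (3:ℝ) ≥ 0)]; norm_num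
    calc (4:ℝ)/3 = (2/Real.sqrt 3)^2 := hsq.symm
      _ ≤ R^2 := by nlinarith [Real.sqrt_nonneg 3, hR0, hR, (by positivity : (0:ℝ) < 2/Real.sqrt 3)]
  set I : Set ℝ := Set.Ioo (-π) π with hI
  set E : Set ℝ := I ∩ gg K ⁻¹' (Set.Ioi (2/3)) with hE
  have hEm : MeasurableSet E :=
    measurableSet_Ioo.inter ((gg_stronglyMeasurable hK).measurable (measurableSet_Ioi))
  have hEI : E ⊆ I := Set.inter_subset_left
  have hIfin : volume I ≠ ⊤ := by rw [hI, Real.volume_Ioo]; exact ENNReal.ofReal_ne_top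
  have hEfin : volume E ≠ ⊤ := fun h => hIfin (top_le_iff.mp (h ▸ measure_mono hEI))
  have hfinD : volume (I \ E) ≠ ⊤ :=
    fun h => hIfin (top_le_iff.mp (h ▸ measure_mono Set.diff_subset))
  have hint : IntegrableOn (gg K) I := gg_integrableOn hK hR0.le hRK hIfin
  have hvol := volume_eq_integral_gg hK hR0.le hRK
  have hsplit : ∫ θ in I, gg K θ = (∫ θ in E, gg K θ) + ∫ θ in I \ E, gg K θ := by
    rw [← setIntegral_union Set.disjoint_sdiff_right (measurableSet_Ioo.diff hEm)
      (hint.mono_set hEI) (hint.mono_set Set.diff_subset), Set.union_diff_cancel hEI]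
  have hb1 : ∫ θ in E, gg K θ ≤ (volume E).toReal * (R^2/2) := by
    calc ∫ θ in E, gg K θ ≤ ∫ _θ in E, R^2/2 :=
          setIntegral_mono_on (hint.mono_set hEI)
            (integrableOn_const hEfin) hEm
            (fun θ _ => gg_bounded hK hR0.le hRK θ)
      _ = (volume E).toReal * (R^2/2) := by rw [setIntegral_const, smul_eq_mul, measureReal_def]
  have hb2 : ∫ θ in I \ E, gg K θ ≤ (volume (I \ E)).toReal * (2/3) := by
    calc ∫ θ in I \ E, gg K θ ≤ ∫ _θ in I \ E, (2:ℝ)/3 :=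
          setIntegral_mono_on (hint.mono_set Set.diff_subset)
            (integrableOn_const hfinD) (measurableSet_Ioo.diff hEm)
            (fun θ hθ => by
              by_contra hgt
              push_neg at hgt
              exact hθ.2 ⟨hθ.1, hgt⟩)
      _ = (volume (I \ E)).toReal * (2/3) := by rw [setIntegral_const, smul_eq_mul, measureReal_def]
  have hm1 : volume E + volume (I \ E) = volume I := by
    rw [measure_add_diff hEm.nullMeasurableSet I, Set.union_eq_self_of_subset_left hEI]
  have ht1 : (volume E).toReal + (volume (I \ E)).toReal = 2*π := by
    rw [← ENNReal.toReal_add hEfin hfinD, hm1, hI, Real.volume_Ioo,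
      ENNReal.toReal_ofReal (by linarith)]
    ring
  have hEle : (volume E).toReal ≤ 4*π/3 := measure_E_le hKc hK hT32
  have hE0 : 0 ≤ (volume E).toReal := ENNReal.toReal_nonneg
  have hD0 : 0 ≤ (volume (I \ E)).toReal := ENNReal.toReal_nonneg
  rw [hvol, hsplit]
  nlinarith [hb1, hb2, ht1, hEle, hE0, hD0, hR43]

lemma gg_intervalIntegrable {K : Set (ℝ × ℝ)} (hK : MeasurableSet K) {M : ℝ} (hM0 : 0 ≤ M)
    (hM : ∀ p ∈ K, p.1^2 + p.2^2 ≤ M^2) (a b : ℝ) :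
    IntervalIntegrable (gg K) volume a b := by
  rw [intervalIntegrable_iff]
  exact gg_integrableOn hK hM0 hM (by rw [Set.uIoc]; exact measure_Ioc_lt_top.ne)

lemma sd_comm (p q : ℝ × ℝ) : sd p q = sd q p := by
  simp only [sd]; ring

lemma isodiam {U : Set (ℝ × ℝ)} (hUc : IsCompact U)
    (hd : ∀ p ∈ U, ∀ q ∈ U, sd p q ≤ 4) : (volume U).toReal ≤ π := by
  have hπ : 0 < π := Real.pi_pos
  rcases U.eq_empty_or_nonempty with rfl | hne
  · simp [hπ.le]
  obtain ⟨o, hoU, ho⟩ := hUc.exists_isMinOn hne continuous_snd.continuousOn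
  set V : Set (ℝ × ℝ) := (fun p => p + o) ⁻¹' U with hV
  have hVc : IsCompact V := by
    have himg : V = (fun p => p - o) '' U := by
      ext p
      constructor
      · intro hp
        exact ⟨p + o, hp, add_sub_cancel_right p o⟩
      · rintro ⟨q, hq, rfl⟩
        have hqo : q - o + o = q := by abel
        rw [hV, Set.mem_preimage, hqo]
        exact hq
    rw [himg]
    exact hUc.image (continuous_id.sub continuous_const)
  have hVm : MeasurableSet V := hVc.isClosed.measurableSet
  have hmp : MeasurePreserving (fun p : ℝ × ℝ => p + o) volume volume := by
    rw [Measure.volume_eq_prod]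
    exact (measurePreserving_add_right volume o.1).prod (measurePreserving_add_right volume o.2)
  have hvolV : volume V = volume U :=
    hmp.measure_preimage hUc.isClosed.measurableSet.nullMeasurableSet
  have h0V : ((0:ℝ), (0:ℝ)) ∈ V := by
    have : ((0:ℝ), (0:ℝ)) + o = o := by
      ext <;> simp
    simpa [hV, this] using hoU
  have hdV : ∀ p ∈ V, ∀ q ∈ V, sd p q ≤ 4 := by
    intro p hp q hq
    have := hd _ hp _ hq
    simpa [sd, Prod.fst_add, Prod.snd_add, add_sub_add_right_eq_sub] using this
  have hupper : ∀ p ∈ V, 0 ≤ p.2 := by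
    intro p hp
    have h2 : o.2 ≤ (p + o).2 := ho hp
    simp only [Prod.snd_add] at h2
    linarith
  have hR4 : ∀ p ∈ V, p.1^2 + p.2^2 ≤ 2^2 := by
    intro p hp
    have := hdV _ hp _ h0V
    have hsd : sd p ((0:ℝ),(0:ℝ)) = p.1^2 + p.2^2 := by simp [sd]
    rw [hsd] at this
    norm_num
    linarith
  have hvol := volume_eq_integral_gg hVm (by norm_num : (0:ℝ) ≤ 2) hR4
  have hii : ∀ a b : ℝ, IntervalIntegrable (gg V) volume a b :=
    gg_intervalIntegrable hVm (by norm_num) hR4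
  have hIoo : ∫ θ in Set.Ioo (-π) π, gg V θ = ∫ θ in (-π)..π, gg V θ := by
    rw [intervalIntegral.integral_of_le (by linarith), integral_Ioc_eq_integral_Ioo]
  have hzero : ∫ θ in (-π)..(0:ℝ), gg V θ = 0 := by
    rw [intervalIntegral.integral_of_le (by linarith), integral_Ioc_eq_integral_Ioo]
    apply setIntegral_eq_zero_of_forall_eq_zero
    intro θ hθ
    apply gg_eq_zero hVm
    rintro ⟨r, hr, hmem⟩
    have hsin : Real.sin θ < 0 := Real.sin_neg_of_neg_of_neg_pi_lt hθ.2 hθ.1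
    have := hupper _ hmem
    simp only [pt] at this
    nlinarith
  have hsplit1 : ∫ θ in (-π)..π, gg V θ
      = (∫ θ in (-π)..(0:ℝ), gg V θ) + ∫ θ in (0:ℝ)..π, gg V θ :=
    (intervalIntegral.integral_add_adjacent_intervals (hii _ _) (hii _ _)).symm
  have hsplit2 : ∫ θ in (0:ℝ)..π, gg V θ
      = (∫ θ in (0:ℝ)..(π/2), gg V θ) + ∫ θ in (π/2)..π, gg V θ :=
    (intervalIntegral.integral_add_adjacent_intervals (hii _ _) (hii _ _)).symm
  have hshift : ∫ θ in (π/2)..π, gg V θ = ∫ θ in (0:ℝ)..(π/2), gg V (θ + π/2) := by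
    rw [intervalIntegral.integral_comp_add_right (fun θ => gg V θ) (π/2)]
    norm_num
  have hiiShift : IntervalIntegrable (fun θ => gg V (θ + π/2)) volume 0 (π/2) := by
    have h := (hii (π/2) π).comp_add_right (π/2)
    have e1 : π/2 - π/2 = (0:ℝ) := by ring
    have e2 : π - π/2 = π/2 := by ring
    rwa [e1, e2] at h
  have hcomb : ∫ θ in (0:ℝ)..(π/2), (gg V θ + gg V (θ + π/2))
      = (∫ θ in (0:ℝ)..(π/2), gg V θ) + ∫ θ in (0:ℝ)..(π/2), gg V (θ + π/2) :=
    intervalIntegral.integral_add (hii _ _) hiiShift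
  have hptwise : ∫ θ in (0:ℝ)..(π/2), (gg V θ + gg V (θ + π/2))
      ≤ ∫ _θ in (0:ℝ)..(π/2), (2:ℝ) := by
    apply intervalIntegral.integral_mono_on (by linarith)
      ((hii _ _).add hiiShift) intervalIntegrable_const
    intro θ _
    apply sigma_le_diam hVc hVm h0V hdV
    rw [show θ - (θ + π/2) = -(π/2) by ring, Real.cos_neg, Real.cos_pi_div_two]
  have hconst : ∫ _θ in (0:ℝ)..(π/2), (2:ℝ) = π := by
    rw [intervalIntegral.integral_const, smul_eq_mul]
    ring
  rw [← hvolV, hvol, hIoo, hsplit1, hzero, hsplit2, hshift, zero_add]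
  calc (∫ θ in (0:ℝ)..(π/2), gg V θ) + ∫ θ in (0:ℝ)..(π/2), gg V (θ + π/2)
      = ∫ θ in (0:ℝ)..(π/2), (gg V θ + gg V (θ + π/2)) := hcomb.symm
    _ ≤ π := hptwise.trans_eq hconst

lemma sd_le_closure {A : Set (ℝ × ℝ)} (h : ∀ p ∈ A, ∀ q ∈ A, sd p q ≤ 4) :
    ∀ p ∈ closure A, ∀ q ∈ closure A, sd p q ≤ 4 := by
  have step1 : ∀ q ∈ A, ∀ p ∈ closure A, sd p q ≤ 4 := by
    intro q hq p hp
    have hcont : Continuous (fun p : ℝ × ℝ => sd p q) :=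
      ((continuous_fst.sub continuous_const).pow 2).add
        ((continuous_snd.sub continuous_const).pow 2)
    have hcl : IsClosed {p : ℝ × ℝ | sd p q ≤ 4} := isClosed_le hcont continuous_const
    exact closure_minimal (fun r hr => h r hr q hq) hcl hp
  intro p hp q hq
  have hcont : Continuous (fun r : ℝ × ℝ => sd p r) :=
    ((continuous_const.sub continuous_fst).pow 2).add
      ((continuous_const.sub continuous_snd).pow 2)
  have hcl : IsClosed {r : ℝ × ℝ | sd p r ≤ 4} := isClosed_le hcont continuous_const
  refine closure_minimal (fun r hr => ?_) hcl hq
  show sd p r ≤ 4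
  exact step1 r hr p hp

lemma pair_bound {K : Set (ℝ × ℝ)} (hKc : IsCompact K) (hK : MeasurableSet K)
    (hsym : ∀ p ∈ K, -p ∈ K)
    (hT32 : ∀ p ∈ K, ∀ q ∈ K, ∀ r ∈ K, sd p q ≤ 4 ∨ sd q r ≤ 4 ∨ sd p r ≤ 4)
    (hR4 : ∀ p ∈ K, p.1^2 + p.2^2 ≤ 2^2) (a : ℝ) :
    (∫ θ in a..(a + π/2), gg K θ) + (∫ θ in (a + π/2)..(a + π), gg K θ) ≤ π := by
  have hπ : 0 < π := Real.pi_pos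
  have hii := gg_intervalIntegrable hK (by norm_num : (0:ℝ) ≤ 2) hR4
  have hshift : ∫ θ in (a + π/2)..(a + π), gg K θ
      = ∫ θ in a..(a + π/2), gg K (θ + π/2) := by
    rw [intervalIntegral.integral_comp_add_right (fun θ => gg K θ) (π/2),
      show a + π/2 + π/2 = a + π by ring]
  have hiiShift : IntervalIntegrable (fun θ => gg K (θ + π/2)) volume a (a + π/2) := by
    have h := (hii (a + π/2) (a + π)).comp_add_right (π/2)
    rwa [show a + π/2 - π/2 = a by ring, show a + π - π/2 = a + π/2 by ring] at h
  rw [hshift, ← intervalIntegral.integral_add (hii _ _) hiiShift]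
  have hR4' : ∀ p ∈ K, p.1^2 + p.2^2 ≤ 4 := by
    intro p hp; have := hR4 p hp; norm_num at this; linarith
  calc ∫ θ in a..(a + π/2), (gg K θ + gg K (θ + π/2))
      ≤ ∫ _θ in a..(a + π/2), (2:ℝ) := by
        apply intervalIntegral.integral_mono_on (by linarith)
          ((hii _ _).add hiiShift) intervalIntegrable_const
        intro θ _
        apply sigma_le hKc hK hsym hT32 hR4'
        rw [show θ - (θ + π/2) = -(π/2) by ring, Real.cos_neg, Real.cos_pi_div_two]
    _ = π := by
        rw [intervalIntegral.integral_const, smul_eq_mul]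
        ring

lemma boundB {K : Set (ℝ × ℝ)} (hKc : IsCompact K) (hsym : ∀ p ∈ K, -p ∈ K)
    (hT32 : ∀ p ∈ K, ∀ q ∈ K, ∀ r ∈ K, sd p q ≤ 4 ∨ sd q r ≤ 4 ∨ sd p r ≤ 4) :
    (volume K).toReal ≤ 2*π := by
  have hπ : 0 < π := Real.pi_pos
  have hK : MeasurableSet K := hKc.isClosed.measurableSet
  by_cases hx : ∃ x ∈ K, 4 ≤ x.1^2 + x.2^2
  · obtain ⟨x, hxK, hx4⟩ := hx
    have hnxK : -x ∈ K := hsym x hxK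
    set A1 : Set (ℝ × ℝ) := {z ∈ K | 4 < sd z x} with hA1
    set A2 : Set (ℝ × ℝ) := {z ∈ K | 4 < sd z (-x)} with hA2
    have hdA1 : ∀ p ∈ A1, ∀ q ∈ A1, sd p q ≤ 4 := by
      rintro p ⟨hpK, hp⟩ q ⟨hqK, hq⟩
      rcases hT32 p hpK q hqK x hxK with h | h | h
      · exact h
      · exact absurd h (not_le.mpr hq)
      · exact absurd h (not_le.mpr hp)
    have hdA2 : ∀ p ∈ A2, ∀ q ∈ A2, sd p q ≤ 4 := by
      rintro p ⟨hpK, hp⟩ q ⟨hqK, hq⟩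
      rcases hT32 p hpK q hqK (-x) hnxK with h | h | h
      · exact h
      · exact absurd h (not_le.mpr hq)
      · exact absurd h (not_le.mpr hp)
    have hc1 : IsCompact (closure A1) :=
      hKc.of_isClosed_subset isClosed_closure
        (closure_minimal (Set.sep_subset _ _) hKc.isClosed)
    have hc2 : IsCompact (closure A2) :=
      hKc.of_isClosed_subset isClosed_closure
        (closure_minimal (Set.sep_subset _ _) hKc.isClosed)
    have hiso1 : (volume (closure A1)).toReal ≤ π := isodiam hc1 (sd_le_closure hdA1)
    have hiso2 : (volume (closure A2)).toReal ≤ π := isodiam hc2 (sd_le_closure hdA2)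
    have hcover : K ⊆ closure A1 ∪ closure A2 ∪ {((0:ℝ),(0:ℝ))} := by
      intro z hz
      by_cases h1 : 4 < sd z x
      · exact Or.inl (Or.inl (subset_closure ⟨hz, h1⟩))
      · by_cases h2 : 4 < sd z (-x)
        · exact Or.inl (Or.inr (subset_closure ⟨hz, h2⟩))
        · push_neg at h1 h2
          have hzz : z.1^2 + z.2^2 ≤ 0 := by
            have hsum : sd z x + sd z (-x) = 2*(z.1^2 + z.2^2) + 2*(x.1^2 + x.2^2) := by
              simp only [sd, Prod.fst_neg, Prod.snd_neg]
              ring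
            nlinarith
          have hz1 : z.1 = 0 := by nlinarith [sq_nonneg z.1, sq_nonneg z.2]
          have hz2 : z.2 = 0 := by nlinarith [sq_nonneg z.1, sq_nonneg z.2]
          right
          simp [Set.mem_singleton_iff, Prod.ext_iff, hz1, hz2]
    have hsing : volume ({((0:ℝ),(0:ℝ))} : Set (ℝ × ℝ)) = 0 := by
      have he : ({((0:ℝ),(0:ℝ))} : Set (ℝ × ℝ)) = ({(0:ℝ)} : Set ℝ) ×ˢ ({(0:ℝ)} : Set ℝ) := by
        ext p; simp [Prod.ext_iff]
      rw [he, Measure.volume_eq_prod, Measure.prod_prod, Real.volume_singleton, mul_zero]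
    have hle : volume K ≤ volume (closure A1) + volume (closure A2) := by
      calc volume K ≤ volume (closure A1 ∪ closure A2 ∪ {((0:ℝ),(0:ℝ))}) := measure_mono hcover
        _ ≤ volume (closure A1 ∪ closure A2) + volume ({((0:ℝ),(0:ℝ))} : Set (ℝ × ℝ)) :=
            measure_union_le _ _
        _ = volume (closure A1 ∪ closure A2) := by rw [hsing, add_zero]
        _ ≤ volume (closure A1) + volume (closure A2) := measure_union_le _ _
    have hfin1 : volume (closure A1) ≠ ⊤ := hc1.measure_lt_top.ne
    have hfin2 : volume (closure A2) ≠ ⊤ := hc2.measure_lt_top.ne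
    calc (volume K).toReal
        ≤ (volume (closure A1) + volume (closure A2)).toReal :=
          ENNReal.toReal_mono (ENNReal.add_ne_top.mpr ⟨hfin1, hfin2⟩) hle
      _ = (volume (closure A1)).toReal + (volume (closure A2)).toReal :=
          ENNReal.toReal_add hfin1 hfin2
      _ ≤ 2*π := by linarith
  · push_neg at hx
    have hR4 : ∀ p ∈ K, p.1^2 + p.2^2 ≤ 2^2 := by
      intro p hp
      have := hx p hp
      norm_num
      linarith
    have hvol := volume_eq_integral_gg hK (by norm_num : (0:ℝ) ≤ 2) hR4
    have hii := gg_intervalIntegrable hK (by norm_num : (0:ℝ) ≤ 2) hR4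
    have hIoo : ∫ θ in Set.Ioo (-π) π, gg K θ = ∫ θ in (-π)..π, gg K θ := by
      rw [intervalIntegral.integral_of_le (by linarith), integral_Ioc_eq_integral_Ioo]
    have hs1 : ∫ θ in (-π)..π, gg K θ
        = (∫ θ in (-π)..(0:ℝ), gg K θ) + ∫ θ in (0:ℝ)..π, gg K θ :=
      (intervalIntegral.integral_add_adjacent_intervals (hii _ _) (hii _ _)).symm
    have hs2 : ∫ θ in (-π)..(0:ℝ), gg K θ
        = (∫ θ in (-π)..(-(π/2)), gg K θ) + ∫ θ in (-(π/2))..(0:ℝ), gg K θ :=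
      (intervalIntegral.integral_add_adjacent_intervals (hii _ _) (hii _ _)).symm
    have hs3 : ∫ θ in (0:ℝ)..π, gg K θ
        = (∫ θ in (0:ℝ)..(π/2), gg K θ) + ∫ θ in (π/2)..π, gg K θ :=
      (intervalIntegral.integral_add_adjacent_intervals (hii _ _) (hii _ _)).symm
    have hpb1 := pair_bound hKc hK hsym hT32 hR4 (-π)
    rw [show (-π) + π/2 = -(π/2) by ring, show (-π) + π = (0:ℝ) by ring] at hpb1
    have hpb2 := pair_bound hKc hK hsym hT32 hR4 0
    rw [show (0:ℝ) + π/2 = π/2 by ring, show (0:ℝ) + π = π by ring] at hpb2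
    rw [hvol, hIoo, hs1, hs2, hs3]
    linarith

lemma isClosed_sd_le_left (w : ℝ × ℝ) : IsClosed {z : ℝ × ℝ | sd z w ≤ 4} :=
  isClosed_le (((continuous_fst.sub continuous_const).pow 2).add
    ((continuous_snd.sub continuous_const).pow 2)) continuous_const

lemma isClosed_sd_le_right (w : ℝ × ℝ) : IsClosed {z : ℝ × ℝ | sd w z ≤ 4} :=
  isClosed_le (((continuous_const.sub continuous_fst).pow 2).add
    ((continuous_const.sub continuous_snd).pow 2)) continuous_const

lemma t32_closure {T : Set (ℝ × ℝ)}
    (h : ∀ p ∈ T, ∀ q ∈ T, ∀ r ∈ T, sd p q ≤ 4 ∨ sd q r ≤ 4 ∨ sd p r ≤ 4) :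
    ∀ p ∈ closure T, ∀ q ∈ closure T, ∀ r ∈ closure T,
      sd p q ≤ 4 ∨ sd q r ≤ 4 ∨ sd p r ≤ 4 := by
  have stepA : ∀ q ∈ T, ∀ r ∈ T, ∀ p ∈ closure T,
      sd p q ≤ 4 ∨ sd q r ≤ 4 ∨ sd p r ≤ 4 := by
    intro q hq r hr p hp
    by_cases hqr : sd q r ≤ 4
    · exact Or.inr (Or.inl hqr)
    · have hcl : IsClosed {z : ℝ × ℝ | sd z q ≤ 4 ∨ sd z r ≤ 4} := by
        have : {z : ℝ × ℝ | sd z q ≤ 4 ∨ sd z r ≤ 4}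
            = {z : ℝ × ℝ | sd z q ≤ 4} ∪ {z : ℝ × ℝ | sd z r ≤ 4} := rfl
        rw [this]
        exact (isClosed_sd_le_left q).union (isClosed_sd_le_left r)
      have hsub : T ⊆ {z : ℝ × ℝ | sd z q ≤ 4 ∨ sd z r ≤ 4} := by
        intro z hz
        rcases h z hz q hq r hr with h' | h' | h'
        · exact Or.inl h'
        · exact absurd h' hqr
        · exact Or.inr h'
      rcases closure_minimal hsub hcl hp with h' | h'
      · exact Or.inl h'
      · exact Or.inr (Or.inr h')
  have stepB : ∀ p ∈ closure T, ∀ r ∈ T, ∀ q ∈ closure T,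
      sd p q ≤ 4 ∨ sd q r ≤ 4 ∨ sd p r ≤ 4 := by
    intro p hp r hr q hq
    by_cases hpr : sd p r ≤ 4
    · exact Or.inr (Or.inr hpr)
    · have hcl : IsClosed {z : ℝ × ℝ | sd p z ≤ 4 ∨ sd z r ≤ 4} :=
        (isClosed_sd_le_right p).union (isClosed_sd_le_left r)
      have hsub : T ⊆ {z : ℝ × ℝ | sd p z ≤ 4 ∨ sd z r ≤ 4} := by
        intro z hz
        rcases stepA z hz r hr p hp with h' | h' | h'
        · exact Or.inl h'
        · exact Or.inr h'
        · exact absurd h' hpr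
      rcases closure_minimal hsub hcl hq with h' | h'
      · exact Or.inl h'
      · exact Or.inr (Or.inl h')
  intro p hp q hq r hr
  by_cases hpq : sd p q ≤ 4
  · exact Or.inl hpq
  · have hcl : IsClosed {z : ℝ × ℝ | sd q z ≤ 4 ∨ sd p z ≤ 4} :=
      (isClosed_sd_le_right q).union (isClosed_sd_le_right p)
    have hsub : T ⊆ {z : ℝ × ℝ | sd q z ≤ 4 ∨ sd p z ≤ 4} := by
      intro z hz
      rcases stepB p hp z hz q hq with h' | h' | h'
      · exact absurd h' hpq
      · exact Or.inl h'
      · exact Or.inr h'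
    rcases closure_minimal hsub hcl hr with h' | h'
    · exact Or.inr (Or.inl h')
    · exact Or.inr (Or.inr h')

def e2 : EuclideanSpace ℝ (Fin 2) ≃ᵐ ℝ × ℝ :=
  (MeasurableEquiv.toLp 2 (Fin 2 → ℝ)).symm.trans (MeasurableEquiv.finTwoArrow)

lemma e2_mp : MeasurePreserving e2 volume volume :=
  (volume_preserving_finTwoArrow ℝ).comp (EuclideanSpace.volume_preserving_symm_measurableEquiv_toLp (Fin 2))

lemma sd_e2 (x y : EuclideanSpace ℝ (Fin 2)) : sd (e2 x) (e2 y) = dist x y ^ 2 := by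
  have hd : dist x y = Real.sqrt ((x 0 - y 0)^2 + (x 1 - y 1)^2) := by
    rw [EuclideanSpace.dist_eq]
    congr 1
    rw [Fin.sum_univ_two]
    simp [Real.dist_eq, sq_abs]
  rw [hd, Real.sq_sqrt (by positivity)]
  rfl

lemma dist_le_two_iff (x y : EuclideanSpace ℝ (Fin 2)) :
    dist x y ≤ 2 ↔ sd (e2 x) (e2 y) ≤ 4 := by
  rw [sd_e2]
  constructor
  · intro h
    nlinarith [dist_nonneg (x := x) (y := y)]
  · intro h
    nlinarith [dist_nonneg (x := x) (y := y)]

lemma nsq_e2 (x : EuclideanSpace ℝ (Fin 2)) : (e2 x).1^2 + (e2 x).2^2 = ‖x‖^2 := by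
  rw [EuclideanSpace.norm_eq, Real.sq_sqrt (by positivity), Fin.sum_univ_two]
  simp [Real.norm_eq_abs, sq_abs]
  rfl

end T32Aux

open T32Aux in
theorem symmetric_T32_measure_bound' (S : Set (EuclideanSpace ℝ (Fin 2))) (δ : ℝ)
    (hm : MeasurableSet S)
    (hT : ∀ p ∈ S, ∀ q ∈ S, ∀ r ∈ S, dist p q ≤ 2 ∨ dist q r ≤ 2 ∨ dist p r ≤ 2)
    (hsym : ∀ x ∈ S, -x ∈ S) (hdiam : Metric.diam S = δ)
    (hδ : 4 / Real.sqrt 3 < δ) :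
    volume S ≤ ENNReal.ofReal (min (π * δ ^ 2 / 6 + 4 * π / 9) (2 * π)) := by
  have h3pos : (0:ℝ) < Real.sqrt 3 := by positivity
  have hδ0 : 0 < δ := lt_trans (by positivity) hδ
  have hbdd : Bornology.IsBounded S := by
    by_contra hb
    rw [Metric.diam_eq_zero_of_unbounded hb] at hdiam
    linarith [hdiam ▸ hδ0]
  set R : ℝ := δ/2 with hRdef
  have hR : 2/Real.sqrt 3 < R := by
    have h24 : 2/Real.sqrt 3 = (4/Real.sqrt 3)/2 := by ring
    rw [hRdef, h24]
    linarith
  have hR0 : 0 < R := lt_trans (by positivity) hR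
  set T : Set (ℝ × ℝ) := e2 '' S with hTdef
  have hnorm : ∀ x ∈ S, ‖x‖ ≤ R := by
    intro x hx
    have h1 : dist x (-x) ≤ δ := hdiam ▸ Metric.dist_le_diam_of_mem hbdd hx (hsym x hx)
    have h2 : dist x (-x) = 2*‖x‖ := by
      rw [dist_eq_norm, sub_neg_eq_add, ← two_smul ℝ x, norm_smul]
      simp
    rw [h2] at h1
    rw [hRdef]
    linarith
  have hTn : ∀ p ∈ T, p.1^2 + p.2^2 ≤ R^2 := by
    rintro p ⟨x, hx, rfl⟩
    rw [nsq_e2]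
    have := hnorm x hx
    nlinarith [norm_nonneg x]
  set K : Set (ℝ × ℝ) := closure T with hKdef
  have hTb : Bornology.IsBounded T := by
    apply (Metric.isBounded_closedBall (x := (0:ℝ×ℝ)) (r := R)).subset
    intro p hp
    have hn := hTn p hp
    rw [Metric.mem_closedBall, dist_zero_right]
    rw [Prod.norm_def]
    have h1 : ‖p.1‖ ≤ R := by
      rw [Real.norm_eq_abs]
      nlinarith [abs_nonneg p.1, sq_abs p.1, sq_nonneg p.2]
    have h2 : ‖p.2‖ ≤ R := by
      rw [Real.norm_eq_abs]
      nlinarith [abs_nonneg p.2, sq_abs p.2, sq_nonneg p.1]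
    exact max_le h1 h2
  have hKc : IsCompact K := hTb.isCompact_closure
  have hKm : MeasurableSet K := isClosed_closure.measurableSet
  have hKn : ∀ p ∈ K, p.1^2 + p.2^2 ≤ R^2 := by
    have hcl : IsClosed {p : ℝ × ℝ | p.1^2 + p.2^2 ≤ R^2} :=
      isClosed_le ((continuous_fst.pow 2).add (continuous_snd.pow 2)) continuous_const
    exact fun p hp => closure_minimal hTn hcl hp
  have hsymT : ∀ p ∈ T, -p ∈ T := by
    rintro p ⟨x, hx, rfl⟩
    exact ⟨-x, hsym x hx, rfl⟩
  have hsymK : ∀ p ∈ K, -p ∈ K := fun p hp =>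
    map_mem_closure continuous_neg hp (fun z hz => hsymT z hz)
  have hT32T : ∀ p ∈ T, ∀ q ∈ T, ∀ r ∈ T, sd p q ≤ 4 ∨ sd q r ≤ 4 ∨ sd p r ≤ 4 := by
    rintro p ⟨x, hx, rfl⟩ q ⟨y, hy, rfl⟩ r ⟨z, hz, rfl⟩
    rcases hT x hx y hy z hz with h | h | h
    · exact Or.inl ((dist_le_two_iff x y).mp h)
    · exact Or.inr (Or.inl ((dist_le_two_iff y z).mp h))
    · exact Or.inr (Or.inr ((dist_le_two_iff x z).mp h))
  have hT32K := t32_closure hT32T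
  have hvolT : volume T = volume S := by
    rw [hTdef, MeasurableEquiv.image_eq_preimage_symm]
    exact (e2_mp.symm e2).measure_preimage hm.nullMeasurableSet
  have hle : volume S ≤ volume K := by
    rw [← hvolT]
    exact measure_mono subset_closure
  have hKfin : volume K ≠ ⊤ := hKc.measure_lt_top.ne
  have hA := boundA hKc hKm hT32K hR.le hKn
  have hB := boundB hKc hsymK hT32K
  have hmin : (volume K).toReal ≤ min (π * δ ^ 2 / 6 + 4 * π / 9) (2 * π) := by
    apply le_min _ hB
    calc (volume K).toReal ≤ 2*π/3*R^2 + 4*π/9 := hA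
      _ = π * δ ^ 2 / 6 + 4 * π / 9 := by rw [hRdef]; ring
  calc volume S ≤ volume K := hle
    _ = ENNReal.ofReal ((volume K).toReal) := (ENNReal.ofReal_toReal hKfin).symm
    _ ≤ ENNReal.ofReal (min (π * δ ^ 2 / 6 + 4 * π / 9) (2 * π)) :=
        ENNReal.ofReal_le_ofReal hmin

end

end T32Proof

theorem symmetric_T32_measure_bound (S : Set (EuclideanSpace ℝ (Fin 2))) (δ : ℝ)
    (hm : MeasurableSet S) (hT : IsT32Set S)
    (hsym : ∀ x ∈ S, -x ∈ S) (hdiam : Metric.diam S = δ)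
    (hδ : 4 / Real.sqrt 3 < δ) :
    volume S ≤ ENNReal.ofReal (min (π * δ ^ 2 / 6 + 4 * π / 9) (2 * π)) :=
  symmetric_T32_measure_bound' S δ hm hT hsym hdiam hδ
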